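/- Let a ∈ (−1,1), m₁, m₂, f ∈ ℝ, Z̃₁ = (0,a), Z̃₂ = (0,−a), Z₁ = (0,a,−1)/√(1−a²), Z₂ = (0,−a,−1)/√(1−a²), Z₀ = (0,0,−1), and m̂ᵢ = √(1−a²)·mᵢ. Suppose q̃ : I → D \ {Z̃₁, Z̃₂} is a C² curve satisfying the planar Lagrange equation d²q̃/dt² = −m₁(‖q̃−Z̃₁‖ₐ⁻)^{−3}(q̃−Z̃₁) − m₂(‖q̃−Z̃₂‖ₐ⁻)^{−3}(q̃−Z̃₂) + 2f·q̃. Let τ ↦ t(τ) solve dt/dτ = 1 − x̃(t)² − ỹ(t)² and set q(τ) := π_H(q̃(t(τ))). Then for every τ, q''(τ) + η(q''(τ), q(τ)) q(τ) = m̂₁(η(q,Z₁)²−1)^{−3/2}(Z₁ + η(q,Z₁)q) + m̂₂(η(q,Z₂)²−1)^{−3/2}(Z₂ + η(q,Z₂)q) + 2f η(q,Z₀)^{−3}(Z₀ + η(q,Z₀)q); i.e., the central projection carries solutions of the planar Lagrange problem to solutions of the hyperbolic Lagrange problem with force function m̂₁ coth θ_{Z₁} + m̂₂ coth θ_{Z₂}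 + f tanh² θ_{Z₀}. -/

import Mathlib

noncomputable section

/-- The Minkowski form `η(u,v) = u₁v₁ + u₂v₂ - u₃v₃` on `ℝ³ = ℝ × ℝ × ℝ`. -/
def eta (u v : ℝ × ℝ × ℝ) : ℝ := u.1 * v.1 + u.2.1 * v.2.1 - u.2.2 * v.2.2

/-- The affine norm `‖(x,y)‖ₐ⁻ = √(x² + y²/(1-a²))` on the plane. -/
def normAm (a : ℝ) (p : ℝ × ℝ) : ℝ := Real.sqrt (p.1 ^ 2 + p.2 ^ 2 / (1 - a ^ 2))

/-- Central projection from the unit disc in the plane `{z = -1}` onto the lower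
sheet of the hyperboloid `η(q,q) = -1`. -/
def centralProjH (p : ℝ × ℝ) : ℝ × ℝ × ℝ :=
  (Real.sqrt (1 - p.1 ^ 2 - p.2 ^ 2))⁻¹ • (p.1, p.2, (-1 : ℝ))



lemma hd_fst {f : ℝ → ℝ × ℝ} {v : ℝ × ℝ} {x : ℝ} (h : HasDerivAt f v x) :
    HasDerivAt (fun s => (f s).1) v.1 x := by
  simpa using (h.hasFDerivAt.fst).hasDerivAt

lemma hd_snd {f : ℝ → ℝ × ℝ} {v : ℝ × ℝ} {x : ℝ} (h : HasDerivAt f v x) :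
    HasDerivAt (fun s => (f s).2) v.2 x := by
  simpa using (h.hasFDerivAt.snd).hasDerivAt

lemma rpow_sq_neg_three_half {t : ℝ} (ht : 0 < t) :
    (t ^ 2 : ℝ) ^ (-(3 : ℝ) / 2) = (t ^ 3)⁻¹ := by
  rw [← Real.rpow_natCast t 2, ← Real.rpow_mul ht.le]
  norm_num

set_option maxHeartbeats 2000000 in
lemma key (a m₁ m₂ f X Y x2 y2 R N1 N2 G : ℝ) (D2v qv : ℝ × ℝ × ℝ)
    (ha2 : a ^ 2 < 1)
    (hρ : 0 < 1 - X ^ 2 - Y ^ 2)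
    (hN1pos : 0 < N1) (hN2pos : 0 < N2)
    (hN1 : N1 ^ 2 = X ^ 2 + (Y - a) ^ 2 / (1 - a ^ 2))
    (hN2 : N2 ^ 2 = X ^ 2 + (Y + a) ^ 2 / (1 - a ^ 2))
    (hR : R = (Real.sqrt (1 - X ^ 2 - Y ^ 2))⁻¹)
    (hx2 : x2 = -(m₁ / N1 ^ 3) * X - (m₂ / N2 ^ 3) * X + 2 * f * X)
    (hy2 : y2 = -(m₁ / N1 ^ 3) * (Y - a) - (m₂ / N2 ^ 3) * (Y + a) + 2 * f * Y)
    (hqv : qv = (R * X, R * Y, R * (-1)))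
    (hD2 : D2v = (R * ((1 - X ^ 2 - Y ^ 2) ^ 2 * x2 + X * G),
                  R * ((1 - X ^ 2 - Y ^ 2) ^ 2 * y2 + Y * G),
                  R * (-G))) :
    D2v + eta D2v qv • qv
      = (Real.sqrt (1 - a ^ 2) * m₁ *
            (eta qv ((Real.sqrt (1 - a ^ 2))⁻¹ • ((0 : ℝ), a, (-1 : ℝ))) ^ 2 - 1) ^ (-(3 : ℝ) / 2)) •
          ((Real.sqrt (1 - a ^ 2))⁻¹ • ((0 : ℝ), a, (-1 : ℝ))
            + eta qv ((Real.sqrt (1 - a ^ 2))⁻¹ • ((0 : ℝ), a, (-1 : ℝ))) • qv)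
        + (Real.sqrt (1 - a ^ 2) * m₂ *
            (eta qv ((Real.sqrt (1 - a ^ 2))⁻¹ • ((0 : ℝ), -a, (-1 : ℝ))) ^ 2 - 1) ^ (-(3 : ℝ) / 2)) •
          ((Real.sqrt (1 - a ^ 2))⁻¹ • ((0 : ℝ), -a, (-1 : ℝ))
            + eta qv ((Real.sqrt (1 - a ^ 2))⁻¹ • ((0 : ℝ), -a, (-1 : ℝ))) • qv)
        + (2 * f / (eta qv ((0 : ℝ), (0 : ℝ), (-1 : ℝ))) ^ 3) •
          (((0 : ℝ), (0 : ℝ), (-1 : ℝ)) + eta qv ((0 : ℝ), (0 : ℝ), (-1 : ℝ)) • qv) := by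
  have ha' : (0 : ℝ) < 1 - a ^ 2 := by nlinarith
  set c := Real.sqrt (1 - a ^ 2) with hc
  have hc2 : c ^ 2 = 1 - a ^ 2 := Real.sq_sqrt ha'.le
  have hc0 : 0 < c := Real.sqrt_pos.2 ha'
  have hρ' : (1 - X ^ 2 - Y ^ 2) ≠ 0 := ne_of_gt hρ
  have hR0 : 0 < R := by rw [hR]; exact inv_pos.2 (Real.sqrt_pos.2 hρ)
  have hR2 : R ^ 2 = (1 - X ^ 2 - Y ^ 2)⁻¹ := by
    rw [hR, inv_pow, Real.sq_sqrt hρ.le]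
  have hR4 : (1 - X ^ 2 - Y ^ 2) ^ 2 * R ^ 4 = 1 := by
    rw [show R ^ 4 = (R ^ 2) ^ 2 by ring, hR2]
    field_simp
  have he1 : eta qv (c⁻¹ • ((0 : ℝ), a, (-1 : ℝ))) = (Y * a - 1) * R / c := by
    simp only [eta, hqv, Prod.smul_mk, smul_eq_mul]
    field_simp
    ring
  have he2 : eta qv (c⁻¹ • ((0 : ℝ), -a, (-1 : ℝ))) = (-(Y * a) - 1) * R / c := by
    simp only [eta, hqv, Prod.smul_mk, smul_eq_mul]
    field_simp
    ring
  have he0 : eta qv ((0 : ℝ), (0 : ℝ), (-1 : ℝ)) = -R := by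
    simp only [eta, hqv]
    ring
  have he1sq : eta qv (c⁻¹ • ((0 : ℝ), a, (-1 : ℝ))) ^ 2 - 1 = (N1 * R) ^ 2 := by
    rw [he1, div_pow, mul_pow, mul_pow, hc2, hR2, hN1]
    field_simp
    ring
  have he2sq : eta qv (c⁻¹ • ((0 : ℝ), -a, (-1 : ℝ))) ^ 2 - 1 = (N2 * R) ^ 2 := by
    rw [he2, div_pow, mul_pow, mul_pow, hc2, hR2, hN2]
    field_simp
    ring
  have hcoef1 : (eta qv (c⁻¹ • ((0 : ℝ), a, (-1 : ℝ))) ^ 2 - 1) ^ (-(3 : ℝ) / 2)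
      = (1 - X ^ 2 - Y ^ 2) ^ 2 * R / N1 ^ 3 := by
    rw [he1sq, rpow_sq_neg_three_half (by positivity)]
    rw [eq_div_iff (by positivity), mul_pow]
    field_simp
    linear_combination (-1 : ℝ) * hR4
  have hcoef2 : (eta qv (c⁻¹ • ((0 : ℝ), -a, (-1 : ℝ))) ^ 2 - 1) ^ (-(3 : ℝ) / 2)
      = (1 - X ^ 2 - Y ^ 2) ^ 2 * R / N2 ^ 3 := by
    rw [he2sq, rpow_sq_neg_three_half (by positivity)]
    rw [eq_div_iff (by positivity), mul_pow]
    field_simp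
    linear_combination (-1 : ℝ) * hR4
  have hcoef0 : 2 * f / (eta qv ((0 : ℝ), (0 : ℝ), (-1 : ℝ))) ^ 3
      = -(2 * f) * ((1 - X ^ 2 - Y ^ 2) ^ 2 * R) := by
    rw [he0]
    rw [div_eq_iff (pow_ne_zero 3 (neg_ne_zero.2 hR0.ne'))]
    linear_combination (-(2 * f)) * hR4
  have hV1 : (c⁻¹ • ((0 : ℝ), a, (-1 : ℝ))) + eta qv (c⁻¹ • ((0 : ℝ), a, (-1 : ℝ))) • qv
      = c⁻¹ • (((Y * a - 1) * X * (1 - X ^ 2 - Y ^ 2)⁻¹,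
          a + (Y * a - 1) * Y * (1 - X ^ 2 - Y ^ 2)⁻¹,
          -1 - (Y * a - 1) * (1 - X ^ 2 - Y ^ 2)⁻¹)) := by
    rw [he1, hqv]
    simp only [Prod.smul_mk, smul_eq_mul, Prod.mk_add_mk, Prod.mk.injEq]
    rw [← hR2]
    refine ⟨?_, ?_, ?_⟩ <;> (field_simp <;> ring)
  have hV2 : (c⁻¹ • ((0 : ℝ), -a, (-1 : ℝ))) + eta qv (c⁻¹ • ((0 : ℝ), -a, (-1 : ℝ))) • qv
      = c⁻¹ • (((-(Y * a) - 1) * X * (1 - X ^ 2 - Y ^ 2)⁻¹,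
          -a + (-(Y * a) - 1) * Y * (1 - X ^ 2 - Y ^ 2)⁻¹,
          -1 - (-(Y * a) - 1) * (1 - X ^ 2 - Y ^ 2)⁻¹)) := by
    rw [he2, hqv]
    simp only [Prod.smul_mk, smul_eq_mul, Prod.mk_add_mk, Prod.mk.injEq]
    rw [← hR2]
    refine ⟨?_, ?_, ?_⟩ <;> (field_simp <;> ring)
  have hV0 : (((0 : ℝ), (0 : ℝ), (-1 : ℝ))) + eta qv ((0 : ℝ), (0 : ℝ), (-1 : ℝ)) • qv
      = (-(X * (1 - X ^ 2 - Y ^ 2)⁻¹), -(Y * (1 - X ^ 2 - Y ^ 2)⁻¹),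
          -1 + (1 - X ^ 2 - Y ^ 2)⁻¹) := by
    rw [he0, hqv]
    simp only [Prod.smul_mk, smul_eq_mul, Prod.mk_add_mk, Prod.mk.injEq]
    rw [← hR2]
    refine ⟨?_, ?_, ?_⟩ <;> ring
  have hEta : eta D2v qv = (1 - X ^ 2 - Y ^ 2)⁻¹ *
      (((1 - X ^ 2 - Y ^ 2) ^ 2 * x2 + X * G) * X
        + ((1 - X ^ 2 - Y ^ 2) ^ 2 * y2 + Y * G) * Y + (-G)) := by
    rw [hD2, hqv]
    simp only [eta]
    rw [← hR2]
    ring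
  rw [hcoef1, hcoef2, hcoef0, hV1, hV2, hV0, hEta, hD2, hqv]
  simp only [Prod.smul_mk, smul_eq_mul, Prod.mk_add_mk, Prod.mk.injEq]
  rw [hx2, hy2]
  have hcc : ∀ u A w : ℝ, c * u * A * (c⁻¹ * w) = u * (A * w) := by
    intro u A w; field_simp
  rw [hcc, hcc, hcc, hcc, hcc, hcc]
  refine ⟨?_, ?_, ?_⟩ <;>
    (field_simp; ring)

set_option maxHeartbeats 2000000

/-- The central projection carries solutions of the planar Lagrange problem to
solutions of the hyperbolic Lagrange problem with force function
`m̂₁ coth θ_{Z₁} + m̂₂ coth θ_{Z₂} + f tanh² θ_{Z₀}`. -/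
theorem lagrange_central_projection_hyperbolic
    (a : ℝ) (ha₁ : -1 < a) (ha₂ : a < 1)
    (m₁ m₂ f mhat₁ mhat₂ : ℝ)
    (hm₁ : mhat₁ = Real.sqrt (1 - a ^ 2) * m₁)
    (hm₂ : mhat₂ = Real.sqrt (1 - a ^ 2) * m₂)
    (Zt₁ Zt₂ : ℝ × ℝ) (hZt₁ : Zt₁ = (0, a)) (hZt₂ : Zt₂ = (0, -a))
    (Z₁ Z₂ Z0 : ℝ × ℝ × ℝ)
    (hZ₁ : Z₁ = (Real.sqrt (1 - a ^ 2))⁻¹ • ((0 : ℝ), a, (-1 : ℝ)))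
    (hZ₂ : Z₂ = (Real.sqrt (1 - a ^ 2))⁻¹ • ((0 : ℝ), -a, (-1 : ℝ)))
    (hZ0 : Z0 = ((0 : ℝ), (0 : ℝ), (-1 : ℝ)))
    (qt : ℝ → ℝ × ℝ)
    (hdisc : ∀ s, (qt s).1 ^ 2 + (qt s).2 ^ 2 < 1)
    (hne₁ : ∀ s, qt s ≠ Zt₁) (hne₂ : ∀ s, qt s ≠ Zt₂)
    (hC2 : ContDiff ℝ 2 qt)
    (hODE : ∀ s, deriv (deriv qt) s
        = -(m₁ / (normAm a (qt s - Zt₁)) ^ 3) • (qt s - Zt₁)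
          - (m₂ / (normAm a (qt s - Zt₂)) ^ 3) • (qt s - Zt₂)
          + (2 * f) • qt s)
    (t : ℝ → ℝ)
    (ht : ∀ τ, HasDerivAt t (1 - (qt (t τ)).1 ^ 2 - (qt (t τ)).2 ^ 2) τ)
    (q : ℝ → ℝ × ℝ × ℝ) (hq : q = fun τ => centralProjH (qt (t τ))) :
    ∀ τ, deriv (deriv q) τ + eta (deriv (deriv q) τ) (q τ) • q τ
      = (mhat₁ * (eta (q τ) Z₁ ^ 2 - 1) ^ (-(3 : ℝ) / 2)) •
          (Z₁ + eta (q τ) Z₁ • q τ)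
        + (mhat₂ * (eta (q τ) Z₂ ^ 2 - 1) ^ (-(3 : ℝ) / 2)) •
          (Z₂ + eta (q τ) Z₂ • q τ)
        + (2 * f / (eta (q τ) Z0) ^ 3) • (Z0 + eta (q τ) Z0 • q τ) := by
  subst hZt₁ hZt₂ hZ₁ hZ₂ hZ0 hm₁ hm₂
  have ha2 : a ^ 2 < 1 := by nlinarith
  have h1a : (0 : ℝ) < 1 - a ^ 2 := by nlinarith
  have hρpos : ∀ s, 0 < 1 - (qt s).1 ^ 2 - (qt s).2 ^ 2 := fun s => by
    have := hdisc s; linarith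
  have hσpos : ∀ s, 0 < Real.sqrt (1 - (qt s).1 ^ 2 - (qt s).2 ^ 2) :=
    fun s => Real.sqrt_pos.2 (hρpos s)
  have hd1 : Differentiable ℝ qt := hC2.differentiable (by norm_num)
  have hd2 : Differentiable ℝ (deriv qt) := by
    have h : ContDiff ℝ (1 + 1) qt := by
      rw [show ((1 : WithTop ℕ∞) + 1) = 2 by norm_num]
      exact hC2
    exact (contDiff_succ_iff_deriv.mp h).2.2.differentiable (by norm_num)
  have hqt' : ∀ s, HasDerivAt qt (deriv qt s) s := fun s => (hd1 s).hasDerivAt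
  have hqt'' : ∀ s, HasDerivAt (deriv qt) (deriv (deriv qt) s) s := fun s => (hd2 s).hasDerivAt
  have hX := fun s => hd_fst (hqt' s)
  have hY := fun s => hd_snd (hqt' s)
  have hx1 := fun s => hd_fst (hqt'' s)
  have hy1 := fun s => hd_snd (hqt'' s)
  have hρd := fun s => (((hX s).pow 2).const_sub 1).sub ((hY s).pow 2)
  have hσd := fun s => (Real.hasDerivAt_sqrt (hρpos s).ne').comp s (hρd s)
  have hRd := fun s => (hσd s).inv (hσpos s).ne'
  have hPd := fun s => ((hX s).mul (hx1 s)).add ((hY s).mul (hy1 s))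
  have hF1 := fun s => (hRd s).mul (hX s)
  have hF2 := fun s => (hRd s).mul (hY s)
  have hF3 := fun s => (hRd s).mul_const (-1 : ℝ)
  have hqfun : q = fun τ => ((Real.sqrt (1 - (qt (t τ)).1 ^ 2 - (qt (t τ)).2 ^ 2))⁻¹ * (qt (t τ)).1,
      (Real.sqrt (1 - (qt (t τ)).1 ^ 2 - (qt (t τ)).2 ^ 2))⁻¹ * (qt (t τ)).2, (Real.sqrt (1 - (qt (t τ)).1 ^ 2 - (qt (t τ)).2 ^ 2))⁻¹ * (-1)) := by
    rw [hq]; funext τ'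
    simp only [centralProjH, Prod.smul_mk, smul_eq_mul]
  intro τ
  have hderivq : deriv q = fun τ' =>
      ((1 - (qt (t τ')).1 ^ 2 - (qt (t τ')).2 ^ 2) * ((Real.sqrt (1 - (qt (t τ')).1 ^ 2 - (qt (t τ')).2 ^ 2))⁻¹ * (deriv qt (t τ')).1) + ((qt (t τ')).1 * (deriv qt (t τ')).1 + (qt (t τ')).2 * (deriv qt (t τ')).2) * ((Real.sqrt (1 - (qt (t τ')).1 ^ 2 - (qt (t τ')).2 ^ 2))⁻¹ * (qt (t τ')).1), (1 - (qt (t τ')).1 ^ 2 - (qt (t τ')).2 ^ 2) * ((Real.sqrt (1 - (qt (t τ')).1 ^ 2 - (qt (t τ')).2 ^ 2))⁻¹ * (deriv qt (t τ')).2) + ((qt (t τ')).1 * (deriv qt (t τ')).1 + (qt (t τ')).2 * (deriv qt (t τ')).2) * ((Real.sqrt (1 - (qt (t τ')).1 ^ 2 - (qt (t τ')).2 ^ 2))⁻¹ * (qt (t τ')).2), ((qt (t τ')).1 * (deriv qt (t τ')).1 + (qt (t τ')).2 * (deriv qt (t τ')).2) * ((Real.sqrt (1 - (qt (t τ')).1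 ^ 2 - (qt (t τ')).2 ^ 2))⁻¹ * (-1))) := by
    funext τ'
    have h := HasDerivAt.prodMk ((hF1 (t τ')).comp τ' (ht τ'))
      (HasDerivAt.prodMk ((hF2 (t τ')).comp τ' (ht τ')) ((hF3 (t τ')).comp τ' (ht τ')))
    have hd := h.deriv
    simp only [Function.comp_def, Pi.mul_apply, Pi.add_apply, Pi.sub_apply, Pi.inv_apply, Pi.pow_apply] at hd
    rw [hqfun, hd]
    have hσ2 := Real.sq_sqrt (hρpos (t τ')).le
    have hσ0 : Real.sqrt (1 - (qt (t τ')).1 ^ 2 - (qt (t τ')).2 ^ 2) ≠ 0 := (hσpos (t τ')).ne'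
    set σ := Real.sqrt (1 - (qt (t τ')).1 ^ 2 - (qt (t τ')).2 ^ 2) with hσdef
    simp only [Prod.mk.injEq]
    refine ⟨?_, ?_, ?_⟩ <;>
      · simp only [hσ2]
        field_simp [hσ0, (hρpos (t τ')).ne']
        ring
  have hW1d := fun s => ((hρd s).mul ((hRd s).mul (hx1 s))).add
      ((hPd s).mul ((hRd s).mul (hX s)))
  have hW2d := fun s => ((hρd s).mul ((hRd s).mul (hy1 s))).add
      ((hPd s).mul ((hRd s).mul (hY s)))
  have hW3d := fun s => (hPd s).mul ((hRd s).mul_const (-1 : ℝ))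
  have h2 := HasDerivAt.prodMk ((hW1d (t τ)).comp τ (ht τ))
    (HasDerivAt.prodMk ((hW2d (t τ)).comp τ (ht τ)) ((hW3d (t τ)).comp τ (ht τ)))
  have hd2v := h2.deriv
  simp only [Function.comp_def, Pi.mul_apply, Pi.add_apply, Pi.sub_apply, Pi.inv_apply, Pi.pow_apply] at hd2v
  have hD2val : deriv (deriv q) τ =
      ((Real.sqrt (1 - (qt (t τ)).1 ^ 2 - (qt (t τ)).2 ^ 2))⁻¹ * ((1 - (qt (t τ)).1 ^ 2 - (qt (t τ)).2 ^ 2) ^ 2 * (deriv (deriv qt) (t τ)).1 + (qt (t τ)).1 * (((qt (t τ)).1 * (deriv qt (t τ)).1 + (qt (t τ)).2 * (deriv qt (t τ)).2) ^ 2 + (1 - (qt (t τ)).1 ^ 2 - (qt (t τ)).2 ^ 2) * ((deriv qt (t τ)).1 ^ 2 + (deriv qt (t τ)).2 ^ 2 + (qt (t τ)).1 * (deriv (deriv qt) (t τ)).1 + (qt (t τ)).2 * (deriv (deriv qt) (t τ)).2))),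
       (Real.sqrt (1 - (qt (t τ)).1 ^ 2 - (qt (t τ)).2 ^ 2))⁻¹ * ((1 - (qt (t τ)).1 ^ 2 - (qt (t τ)).2 ^ 2) ^ 2 * (deriv (deriv qt) (t τ)).2 + (qt (t τ)).2 * (((qt (t τ)).1 * (deriv qt (t τ)).1 + (qt (t τ)).2 * (deriv qt (t τ)).2) ^ 2 + (1 - (qt (t τ)).1 ^ 2 - (qt (t τ)).2 ^ 2) * ((deriv qt (t τ)).1 ^ 2 + (deriv qt (t τ)).2 ^ 2 + (qt (t τ)).1 * (deriv (deriv qt) (t τ)).1 + (qt (t τ)).2 * (deriv (deriv qt) (t τ)).2))),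
       (Real.sqrt (1 - (qt (t τ)).1 ^ 2 - (qt (t τ)).2 ^ 2))⁻¹ * (-(((qt (t τ)).1 * (deriv qt (t τ)).1 + (qt (t τ)).2 * (deriv qt (t τ)).2) ^ 2 + (1 - (qt (t τ)).1 ^ 2 - (qt (t τ)).2 ^ 2) * ((deriv qt (t τ)).1 ^ 2 + (deriv qt (t τ)).2 ^ 2 + (qt (t τ)).1 * (deriv (deriv qt) (t τ)).1 + (qt (t τ)).2 * (deriv (deriv qt) (t τ)).2)))) := by
    rw [hderivq, hd2v]
    have hσ2 := Real.sq_sqrt (hρpos (t τ)).le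
    have hσ0 : Real.sqrt (1 - (qt (t τ)).1 ^ 2 - (qt (t τ)).2 ^ 2) ≠ 0 := (hσpos (t τ)).ne'
    set σ := Real.sqrt (1 - (qt (t τ)).1 ^ 2 - (qt (t τ)).2 ^ 2) with hσdef
    simp only [Prod.mk.injEq]
    refine ⟨?_, ?_, ?_⟩ <;>
      · simp only [hσ2]
        field_simp [hσ0, (hρpos (t τ)).ne']
        ring
  have hqval : q τ = ((Real.sqrt (1 - (qt (t τ)).1 ^ 2 - (qt (t τ)).2 ^ 2))⁻¹ * (qt (t τ)).1, (Real.sqrt (1 - (qt (t τ)).1 ^ 2 - (qt (t τ)).2 ^ 2))⁻¹ * (qt (t τ)).2, (Real.sqrt (1 - (qt (t τ)).1 ^ 2 - (qt (t τ)).2 ^ 2))⁻¹ * (-1)) := by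
    rw [hqfun]
  have hsub11 : (qt (t τ) - ((0 : ℝ), a)).1 = (qt (t τ)).1 := by simp
  have hsub12 : (qt (t τ) - ((0 : ℝ), a)).2 = (qt (t τ)).2 - a := by simp
  have hsub21 : (qt (t τ) - ((0 : ℝ), -a)).1 = (qt (t τ)).1 := by simp
  have hsub22 : (qt (t τ) - ((0 : ℝ), -a)).2 = (qt (t τ)).2 + a := by simp
  have hN1sq : (normAm a (qt (t τ) - ((0 : ℝ), a))) ^ 2 = (qt (t τ)).1 ^ 2 + ((qt (t τ)).2 - a) ^ 2 / (1 - a ^ 2) := by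
    simp only [normAm, hsub11, hsub12]
    exact Real.sq_sqrt (add_nonneg (sq_nonneg _) (div_nonneg (sq_nonneg _) h1a.le))
  have hN2sq : (normAm a (qt (t τ) - ((0 : ℝ), -a))) ^ 2 = (qt (t τ)).1 ^ 2 + ((qt (t τ)).2 + a) ^ 2 / (1 - a ^ 2) := by
    simp only [normAm, hsub21, hsub22]
    exact Real.sq_sqrt (add_nonneg (sq_nonneg _) (div_nonneg (sq_nonneg _) h1a.le))
  have hN1pos : 0 < normAm a (qt (t τ) - ((0 : ℝ), a)) := by
    have hne : (qt (t τ)).1 ≠ 0 ∨ (qt (t τ)).2 ≠ a := by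
      by_contra h
      push_neg at h
      exact hne₁ (t τ) (Prod.ext h.1 h.2)
    have hpos : 0 < (normAm a (qt (t τ) - ((0 : ℝ), a))) ^ 2 := by
      rw [hN1sq]
      rcases hne with h | h
      · exact lt_of_lt_of_le (lt_of_le_of_ne (sq_nonneg _) (Ne.symm (pow_ne_zero 2 h)))
          (le_add_of_nonneg_right (div_nonneg (sq_nonneg _) h1a.le))
      · exact add_pos_of_nonneg_of_pos (sq_nonneg _)
          (div_pos (lt_of_le_of_ne (sq_nonneg _)
            (Ne.symm (pow_ne_zero 2 (sub_ne_zero.2 h)))) h1a)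
    have hnn : 0 ≤ normAm a (qt (t τ) - ((0 : ℝ), a)) := Real.sqrt_nonneg _
    rcases hnn.lt_or_eq with h | h
    · exact h
    · exact ((hpos.ne' (by simp [← h])).elim)
  have hN2pos : 0 < normAm a (qt (t τ) - ((0 : ℝ), -a)) := by
    have hne : (qt (t τ)).1 ≠ 0 ∨ (qt (t τ)).2 ≠ -a := by
      by_contra h
      push_neg at h
      exact hne₂ (t τ) (Prod.ext h.1 h.2)
    have hpos : 0 < (normAm a (qt (t τ) - ((0 : ℝ), -a))) ^ 2 := by
      rw [hN2sq]
      rcases hne with h | h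
      · exact lt_of_lt_of_le (lt_of_le_of_ne (sq_nonneg _) (Ne.symm (pow_ne_zero 2 h)))
          (le_add_of_nonneg_right (div_nonneg (sq_nonneg _) h1a.le))
      · have : (qt (t τ)).2 + a ≠ 0 := fun hc => h (by linarith)
        exact add_pos_of_nonneg_of_pos (sq_nonneg _)
          (div_pos (lt_of_le_of_ne (sq_nonneg _) (Ne.symm (pow_ne_zero 2 this))) h1a)
    have hnn : 0 ≤ normAm a (qt (t τ) - ((0 : ℝ), -a)) := Real.sqrt_nonneg _
    rcases hnn.lt_or_eq with h | h
    · exact h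
    · exact ((hpos.ne' (by simp [← h])).elim)
  have hx2v : (deriv (deriv qt) (t τ)).1 = -(m₁ / (normAm a (qt (t τ) - ((0 : ℝ), a))) ^ 3) * (qt (t τ)).1 - m₂ / (normAm a (qt (t τ) - ((0 : ℝ), -a))) ^ 3 * (qt (t τ)).1 + 2 * f * (qt (t τ)).1 := by
    rw [hODE (t τ)]
    simp only [Prod.fst_add, Prod.fst_sub, Prod.smul_fst, smul_eq_mul, hsub11]
    ring
  have hy2v : (deriv (deriv qt) (t τ)).2 = -(m₁ / (normAm a (qt (t τ) - ((0 : ℝ), a))) ^ 3) * ((qt (t τ)).2 - a) - m₂ / (normAm a (qt (t τ) - ((0 : ℝ), -a))) ^ 3 * ((qt (t τ)).2 + a)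
      + 2 * f * (qt (t τ)).2 := by
    rw [hODE (t τ)]
    simp only [Prod.snd_add, Prod.snd_sub, Prod.smul_snd, smul_eq_mul, hsub12, hsub22]
  exact key a m₁ m₂ f (qt (t τ)).1 (qt (t τ)).2 (deriv (deriv qt) (t τ)).1 (deriv (deriv qt) (t τ)).2 (Real.sqrt (1 - (qt (t τ)).1 ^ 2 - (qt (t τ)).2 ^ 2))⁻¹ (normAm a (qt (t τ) - ((0 : ℝ), a))) (normAm a (qt (t τ) - ((0 : ℝ), -a))) (((qt (t τ)).1 * (deriv qt (t τ)).1 + (qt (t τ)).2 * (deriv qt (t τ)).2) ^ 2 + (1 - (qt (t τ)).1 ^ 2 - (qt (t τ)).2 ^ 2) * ((deriv qt (t τ)).1 ^ 2 + (deriv qt (t τ)).2 ^ 2 + (qt (t τ)).1 * (deriv (deriv qt) (t τ)).1 + (qt (t τ)).2 * (deriv (deriv qt) (t τ)).2))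
    (deriv (deriv q) τ) (q τ) ha2 (hρpos (t τ)) hN1pos hN2pos hN1sq hN2sq rfl
    hx2v hy2v hqval hD2val
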